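/- arXiv:1911.00256 — 4 statements merged into one kernel-verified Lean document; each statement's English description precedes it below -/
import Mathlib

section
/- Let X : ℝⁿ → ℝⁿ be a continuously differentiable vector field, and define its Presnov potential H_X : ℝⁿ → ℝ by H_X(x) = ∫₀¹ ⟨X(t·x), x⟩ dt. Then X is coercive if and only if the conservative part ∇H_X is coercive; that is, ⟨X(x), x⟩/‖x‖ → ∞ as ‖x‖ → ∞ if and only if ⟨∇H_X(x), x⟩/‖x‖ → ∞ as ‖x‖ → ∞. -/
set_option maxHeartbeats 1000000
set_option synthInstance.maxHeartbeats 400000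

open RealInnerProductSpace Filter MeasureTheory Metric Set

section aux

variable {n : ℕ}

local notation "E" => EuclideanSpace ℝ (Fin n)

private lemma presnov_diffAt (X : E → E) (hX : ContDiff ℝ 1 X) (x : E) :
    DifferentiableAt ℝ (fun y : E => ∫ t in (0:ℝ)..1, ⟪X (t • y), y⟫) x := by
  obtain ⟨C1, hC1⟩ := (isCompact_closedBall (0:E) (‖x‖+1)).exists_bound_of_continuousOn
    hX.continuous.continuousOn
  obtain ⟨C2, hC2⟩ := (isCompact_closedBall (0:E) (‖x‖+1)).exists_bound_of_continuousOn
    (hX.continuous_fderiv one_ne_zero).continuousOn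
  set F' : E → ℝ → E →L[ℝ] ℝ := fun y t =>
    innerSL ℝ (X (t • y)) + t • ((innerSL ℝ y).comp (fderiv ℝ X (t • y))) with hF'
  have hmem : ∀ t : ℝ, t ∈ Set.uIoc (0:ℝ) 1 → ∀ y ∈ ball x 1,
      t • y ∈ closedBall (0:E) (‖x‖+1) := by
    intro t ht y hy
    rw [Set.uIoc_of_le zero_le_one] at ht
    have hy' : ‖y‖ ≤ ‖x‖ + 1 := by
      have := norm_sub_norm_le y x
      have := (mem_ball_iff_norm.mp hy)
      linarith [norm_sub_norm_le y x]
    rw [mem_closedBall_zero_iff, norm_smul]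
    have : |t| ≤ 1 := abs_le.mpr ⟨by linarith [ht.1], ht.2⟩
    calc ‖t‖ * ‖y‖ ≤ 1 * ‖y‖ := by
          exact mul_le_mul_of_nonneg_right this (norm_nonneg _)
      _ ≤ ‖x‖ + 1 := by simpa using hy'
  have h := intervalIntegral.hasFDerivAt_integral_of_dominated_of_fderiv_le
    (𝕜 := ℝ) (μ := volume) (F := fun (y : E) (t : ℝ) => (⟪X (t • y), y⟫ : ℝ))
    (F' := F') (x₀ := x) (a := 0) (b := 1)
    (bound := fun _ => C1 + (‖x‖+1) * C2) (ball_mem_nhds x one_pos)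
    ?_ ?_ ?_ ?_ ?_ ?_
  · exact h.differentiableAt
  · filter_upwards with y
    exact (Continuous.inner (hX.continuous.comp (continuous_id.smul continuous_const))
      continuous_const).aestronglyMeasurable
  · exact (Continuous.inner (hX.continuous.comp (continuous_id.smul continuous_const))
      continuous_const).intervalIntegrable 0 1
  · apply Continuous.aestronglyMeasurable
    apply Continuous.add
    · exact (innerSL ℝ).continuous.comp
        (hX.continuous.comp (continuous_id.smul continuous_const))
    · exact continuous_id.smul (Continuous.clm_comp continuous_const
        ((hX.continuous_fderiv one_ne_zero).comp (continuous_id.smul continuous_const)))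
  · filter_upwards with t
    intro ht y hy
    have hmem' := hmem t ht y hy
    have hy' : ‖y‖ ≤ ‖x‖ + 1 := by
      have := mem_ball_iff_norm.mp hy
      linarith [norm_sub_norm_le y x]
    have ht1 : |t| ≤ 1 := by
      rw [Set.uIoc_of_le zero_le_one] at ht
      exact abs_le.mpr ⟨by linarith [ht.1], ht.2⟩
    calc ‖F' y t‖ ≤ ‖innerSL ℝ (X (t • y))‖ +
          ‖t • ((innerSL ℝ y).comp (fderiv ℝ X (t • y)))‖ := norm_add_le _ _
      _ ≤ C1 + (‖x‖+1) * C2 := by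
          have h1 : ‖innerSL ℝ (X (t • y))‖ ≤ C1 := by
            rw [innerSL_apply_norm]; exact hC1 _ hmem'
          have h2' : ‖t • ((innerSL ℝ y).comp (fderiv ℝ X (t • y)))‖
              ≤ ‖t‖ * ‖(innerSL ℝ y).comp (fderiv ℝ X (t • y))‖ := ContinuousLinearMap.opNorm_smul_le _ _
          have h2 : ‖(innerSL ℝ y).comp (fderiv ℝ X (t • y))‖ ≤ (‖x‖+1) * C2 := by
            calc ‖(innerSL ℝ y).comp (fderiv ℝ X (t • y))‖
                ≤ ‖innerSL ℝ y‖ * ‖fderiv ℝ X (t • y)‖ := ContinuousLinearMap.opNorm_comp_le _ _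
              _ ≤ (‖x‖+1) * C2 := by
                  rw [innerSL_apply_norm]
                  exact mul_le_mul hy' (hC2 _ hmem') (norm_nonneg _) (by positivity)
          have hnn : (0:ℝ) ≤ ‖(innerSL ℝ y).comp (fderiv ℝ X (t • y))‖ := norm_nonneg _
          have htn : ‖t‖ ≤ 1 := by rwa [Real.norm_eq_abs]
          nlinarith [norm_nonneg t]
  · exact intervalIntegrable_const
  · filter_upwards with t
    intro ht y hy
    have hsmul : HasFDerivAt (fun y : E => t • y) (t • ContinuousLinearMap.id ℝ E) y :=
      (hasFDerivAt_id y).const_smul t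
    have hXd : HasFDerivAt X (fderiv ℝ X (t • y)) (t • y) :=
      (hX.differentiable one_ne_zero (t • y)).hasFDerivAt
    have h1 : HasFDerivAt (fun y : E => X (t • y))
        ((fderiv ℝ X (t • y)).comp (t • ContinuousLinearMap.id ℝ E)) y := hXd.comp y hsmul
    have h2 := h1.inner ℝ (hasFDerivAt_id y)
    refine h2.congr_fderiv (Eq.symm ?_)
    ext v
    simp only [fderivInnerCLM_apply, hF', ContinuousLinearMap.add_apply,
      ContinuousLinearMap.smul_apply, ContinuousLinearMap.comp_apply,
      ContinuousLinearMap.coe_id', id, ContinuousLinearMap.prod_apply,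
      innerSL_apply_apply, smul_eq_mul]
    congr 1
    rw [ContinuousLinearMap.map_smul, real_inner_smul_left, real_inner_comm]

private lemma presnov_inner (X : E → E) (hX : ContDiff ℝ 1 X)
    (H : E → ℝ) (hH : ∀ x, H x = ∫ t in (0:ℝ)..1, ⟪X (t • x), x⟫) (x : E) :
    ⟪gradient H x, x⟫ = ⟪X x, x⟫ := by
  have hHfun : H = fun y : E => ∫ t in (0:ℝ)..1, ⟪X (t • y), y⟫ := funext hH
  have hd : DifferentiableAt ℝ H x := by rw [hHfun]; exact presnov_diffAt X hX x
  set g : ℝ → ℝ := fun u => ⟪X (u • x), x⟫ with hg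
  have hgc : Continuous g :=
    (Continuous.inner (hX.continuous.comp (continuous_id.smul continuous_const))
      continuous_const)
  have hsub : ∀ s : ℝ, H (s • x) = ∫ u in (0:ℝ)..s, g u := by
    intro s
    rw [hH]
    have := intervalIntegral.integral_comp_smul_deriv (a := (0:ℝ)) (b := 1)
      (f := fun t => s * t) (f' := fun _ => s) (g := g)
      (fun t _ => by simpa using (hasDerivAt_id t).const_mul s)
      continuousOn_const hgc
    simp only [mul_zero, mul_one] at this
    rw [← this]
    apply intervalIntegral.integral_congr
    intro t _
    show (⟪X (t • s • x), s • x⟫ : ℝ) = s • g (s * t)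
    rw [smul_smul, mul_comm t s, hg]
    simp only [real_inner_smul_right, smul_eq_mul]
  -- derivative of s ↦ H (s • x) at 1 equals g 1
  have hA : HasDerivAt (fun s : ℝ => H (s • x)) (g 1) 1 := by
    have := intervalIntegral.integral_hasDerivAt_right
      (hgc.intervalIntegrable 0 1)
      (hgc.stronglyMeasurableAtFilter volume (nhds 1)) hgc.continuousAt
    simpa [← hsub] using this
  have hray : HasDerivAt (fun s : ℝ => s • x) x 1 := by
    simpa using (hasDerivAt_id (1:ℝ)).smul_const x
  have hd1 : HasFDerivAt H (fderiv ℝ H x) ((1:ℝ) • x) := by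
    rw [one_smul]; exact hd.hasFDerivAt
  have hB : HasDerivAt (fun s : ℝ => H (s • x)) (fderiv ℝ H x x) 1 :=
    hd1.comp_hasDerivAt 1 hray
  have hgrad : ⟪gradient H x, x⟫ = fderiv ℝ H x x :=
    InnerProductSpace.toDual_symm_apply
  rw [hgrad, hB.unique hA]
  simp [hg]

end aux

/-- **Coercivity is determined by the conservative part** (Tudoran, Theorem 2.2).
A `C¹` vector field `X` on `ℝⁿ` is coercive iff the gradient of its Presnov
potential `H_X x = ∫₀¹ ⟪X (t • x), x⟫ dt` is coercive. -/
theorem coercive_iff_gradient_presnov_coercive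
    {n : ℕ} (X : EuclideanSpace ℝ (Fin n) → EuclideanSpace ℝ (Fin n))
    (hX : ContDiff ℝ 1 X)
    (H : EuclideanSpace ℝ (Fin n) → ℝ)
    (hH : ∀ x, H x = ∫ t in (0:ℝ)..1, ⟪X (t • x), x⟫) :
    Tendsto (fun x => ⟪X x, x⟫ / ‖x‖) (comap (fun x => ‖x‖) atTop) atTop ↔
      Tendsto (fun x => ⟪gradient H x, x⟫ / ‖x‖) (comap (fun x => ‖x‖) atTop) atTop := by
  have key : (fun x => (⟪gradient H x, x⟫ : ℝ) / ‖x‖) = fun x => ⟪X x, x⟫ / ‖x‖ := by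
    funext x
    rw [presnov_inner X hX H hH x]
  rw [key]
end

section
/- Let Ω ⊆ ℝⁿ be an open set that is star-shaped with respect to the origin, and let X : Ω → ℝⁿ be a continuously differentiable vector field. Define H_X : Ω → ℝ by H_X(x) = ∫₀¹ ⟨X(t·x), x⟩ dt. Then for every x ∈ Ω, ⟨X(x), x⟩ = ⟨∇H_X(x), x⟩. -/
open RealInnerProductSpace

set_option maxHeartbeats 2000000 in
open MeasureTheory Metric Set Interval in
/-- On an open set star-shaped with respect to the origin, a `C¹` vector field `X`
satisfies `⟪X x, x⟫ = ⟪∇H_X x, x⟫` where `H_X` is its Presnov potential. -/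
theorem inner_eq_inner_gradient_presnov_of_starShaped
    {n : ℕ} (Ω : Set (EuclideanSpace ℝ (Fin n)))
    (hΩopen : IsOpen Ω)
    (hΩstar : ∀ x ∈ Ω, ∀ t ∈ Set.Icc (0:ℝ) 1, t • x ∈ Ω)
    (X : EuclideanSpace ℝ (Fin n) → EuclideanSpace ℝ (Fin n))
    (hX : ContDiffOn ℝ 1 X Ω)
    (H : EuclideanSpace ℝ (Fin n) → ℝ)
    (hH : ∀ x ∈ Ω, H x = ∫ t in (0:ℝ)..1, ⟪X (t • x), x⟫) :
    ∀ x ∈ Ω, ⟪X x, x⟫ = ⟪gradient H x, x⟫ := by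
  intro x hx
  have hXc : ContinuousOn X Ω := hX.continuousOn
  have hX'c : ContinuousOn (fderiv ℝ X) Ω :=
    hX.continuousOn_fderiv_of_isOpen hΩopen le_rfl
  have hdiff : ∀ z ∈ Ω, HasFDerivAt X (fderiv ℝ X z) z := fun z hz =>
    ((hX.differentiableOn one_ne_zero).differentiableAt (hΩopen.mem_nhds hz)).hasFDerivAt
  -- the compact segment and a safety margin
  have hKcomp : IsCompact ((fun t : ℝ => t • x) '' Set.Icc 0 1) :=
    isCompact_Icc.image (by fun_prop)
  have hKsub : (fun t : ℝ => t • x) '' Set.Icc 0 1 ⊆ Ω := by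
    rintro _ ⟨t, ht, rfl⟩; exact hΩstar x hx t ht
  obtain ⟨δ, δpos, hδ⟩ := hKcomp.exists_thickening_subset_open hΩopen hKsub
  set ε : ℝ := δ / 2 with hε
  have εpos : 0 < ε := by positivity
  have hmem : ∀ t ∈ Set.Icc (0:ℝ) 1, ∀ y ∈ closedBall x ε, t • y ∈ Ω := by
    intro t ht y hy
    apply hδ
    rw [mem_thickening_iff]
    refine ⟨t • x, ⟨t, ht, rfl⟩, ?_⟩
    have : dist (t • y) (t • x) = |t| * dist y x := by
      simp [dist_eq_norm, ← smul_sub, norm_smul, Real.norm_eq_abs]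
    rw [this]
    calc |t| * dist y x ≤ 1 * ε := by
          apply mul_le_mul (abs_le.2 ⟨by linarith [ht.1], ht.2⟩) hy dist_nonneg zero_le_one
      _ < δ := by rw [one_mul]; simpa [hε] using by linarith
  -- the derivative of the integrand in y
  set F' : EuclideanSpace ℝ (Fin n) → ℝ → EuclideanSpace ℝ (Fin n) →L[ℝ] ℝ := fun y t =>
    (fderivInnerCLM ℝ (X (t • y), y)).comp
      (((fderiv ℝ X (t • y)).comp (t • ContinuousLinearMap.id ℝ _)).prod
        (ContinuousLinearMap.id ℝ _)) with hF'def
  have hFderiv : ∀ t ∈ Set.Icc (0:ℝ) 1, ∀ y ∈ closedBall x ε,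
      HasFDerivAt (fun y => (⟪X (t • y), y⟫ : ℝ)) (F' y t) y := by
    intro t ht y hy
    have h1 : HasFDerivAt (fun y : EuclideanSpace ℝ (Fin n) => t • y)
        (t • ContinuousLinearMap.id ℝ _) y := (hasFDerivAt_id y).const_smul t
    have h2 := hdiff _ (hmem t ht y hy)
    exact (h2.comp y h1).inner ℝ (hasFDerivAt_id y)
  -- uniform bounds on the compact set of relevant points
  have hCcomp : IsCompact ((fun p : ℝ × EuclideanSpace ℝ (Fin n) => p.1 • p.2) ''
      (Set.Icc (0:ℝ) 1 ×ˢ closedBall x ε)) :=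
    (isCompact_Icc.prod (isCompact_closedBall x ε)).image (by fun_prop)
  have hCsub : ((fun p : ℝ × EuclideanSpace ℝ (Fin n) => p.1 • p.2) ''
      (Set.Icc (0:ℝ) 1 ×ˢ closedBall x ε)) ⊆ Ω := by
    rintro _ ⟨⟨t, y⟩, ⟨ht, hy⟩, rfl⟩; exact hmem t ht y hy
  obtain ⟨M0, hM0⟩ := hCcomp.exists_bound_of_continuousOn (hXc.mono hCsub)
  obtain ⟨M1, hM1⟩ := hCcomp.exists_bound_of_continuousOn (hX'c.mono hCsub)
  set M : ℝ := max M0 0 + (max M1 0) * (‖x‖ + ε) with hMdef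
  have hynorm : ∀ y ∈ closedBall x ε, ‖y‖ ≤ ‖x‖ + ε := by
    intro y hy
    calc ‖y‖ = ‖x + (y - x)‖ := by congr 1; abel
      _ ≤ ‖x‖ + ‖y - x‖ := norm_add_le _ _
      _ ≤ ‖x‖ + ε := by
          have := mem_closedBall_iff_norm.1 hy
          linarith
  have hbound : ∀ t ∈ Set.Icc (0:ℝ) 1, ∀ y ∈ closedBall x ε, ‖F' y t‖ ≤ M := by
    intro t ht y hy
    have hmemC : t • y ∈ ((fun p : ℝ × EuclideanSpace ℝ (Fin n) => p.1 • p.2) ''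
        (Set.Icc (0:ℝ) 1 ×ˢ closedBall x ε)) := ⟨(t, y), ⟨ht, hy⟩, rfl⟩
    have hXb : ‖X (t • y)‖ ≤ max M0 0 := le_trans (hM0 _ hmemC) (le_max_left _ _)
    have hX'b : ‖fderiv ℝ X (t • y)‖ ≤ max M1 0 := le_trans (hM1 _ hmemC) (le_max_left _ _)
    apply ContinuousLinearMap.opNorm_le_bound
    · have h1 : (0:ℝ) ≤ max M0 0 := le_max_right _ _
      have h2 : (0:ℝ) ≤ max M1 0 := le_max_right _ _
      have h3 : (0:ℝ) ≤ ‖x‖ + ε := by positivity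
      rw [hMdef]; positivity
    · intro v
      have hval : (F' y t) v = ⟪X (t • y), v⟫ + ⟪(fderiv ℝ X (t • y)) (t • v), y⟫ := by
        simp [hF'def]
      rw [hval]
      have e1 : ‖(⟪X (t • y), v⟫ : ℝ)‖ ≤ max M0 0 * ‖v‖ := by
        refine le_trans (norm_inner_le_norm _ _) ?_
        exact mul_le_mul_of_nonneg_right hXb (norm_nonneg _)
      have e2 : ‖(⟪(fderiv ℝ X (t • y)) (t • v), y⟫ : ℝ)‖ ≤ (max M1 0 * (‖x‖ + ε)) * ‖v‖ := by
        refine le_trans (norm_inner_le_norm _ _) ?_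
        have hb1 : ‖(fderiv ℝ X (t • y)) (t • v)‖ ≤ max M1 0 * ‖v‖ := by
          calc ‖(fderiv ℝ X (t • y)) (t • v)‖ ≤ ‖fderiv ℝ X (t • y)‖ * ‖t • v‖ :=
                ContinuousLinearMap.le_opNorm _ _
            _ = ‖fderiv ℝ X (t • y)‖ * (|t| * ‖v‖) := by rw [norm_smul, Real.norm_eq_abs]
            _ ≤ max M1 0 * (1 * ‖v‖) := by
                apply mul_le_mul hX'b ?_ (by positivity) (le_max_right _ _)
                exact mul_le_mul_of_nonneg_right (abs_le.2 ⟨by linarith [ht.1], ht.2⟩)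
                  (norm_nonneg _)
            _ = max M1 0 * ‖v‖ := by ring
        calc ‖(fderiv ℝ X (t • y)) (t • v)‖ * ‖y‖ ≤ (max M1 0 * ‖v‖) * (‖x‖ + ε) := by
              apply mul_le_mul hb1 (hynorm y hy) (norm_nonneg _)
              positivity
          _ = (max M1 0 * (‖x‖ + ε)) * ‖v‖ := by ring
      calc ‖(⟪X (t • y), v⟫ : ℝ) + ⟪(fderiv ℝ X (t • y)) (t • v), y⟫‖
            ≤ ‖(⟪X (t • y), v⟫ : ℝ)‖ + ‖(⟪(fderiv ℝ X (t • y)) (t • v), y⟫ : ℝ)‖ :=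
              norm_add_le _ _
          _ ≤ max M0 0 * ‖v‖ + (max M1 0 * (‖x‖ + ε)) * ‖v‖ := add_le_add e1 e2
          _ = M * ‖v‖ := by rw [hMdef]; ring
  -- continuity in t of everything
  have hsmaps : Set.MapsTo (fun t : ℝ => t • x) (Set.Icc 0 1) Ω := fun t ht => hΩstar x hx t ht
  have c1 : ContinuousOn (fun t : ℝ => X (t • x)) (Set.Icc 0 1) :=
    hXc.comp (by fun_prop) hsmaps
  have c2 : ContinuousOn (fun t : ℝ => fderiv ℝ X (t • x)) (Set.Icc 0 1) :=
    hX'c.comp (by fun_prop) hsmaps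
  have c3 : ContinuousOn (fun t : ℝ =>
      fderivInnerCLM ℝ (X (t • x), x)) (Set.Icc 0 1) :=
    ((isBoundedBilinearMap_inner (𝕜 := ℝ)
      (E := EuclideanSpace ℝ (Fin n))).isBoundedLinearMap_deriv.continuous).comp_continuousOn
      (c1.prodMk continuousOn_const)
  have c4 : ContinuousOn (fun t : ℝ =>
      t • ContinuousLinearMap.id ℝ (EuclideanSpace ℝ (Fin n))) (Set.Icc 0 1) :=
    (continuous_id.smul continuous_const).continuousOn
  have c5 := c2.clm_comp c4
  have c6 : ContinuousOn (fun t : ℝ =>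
      (((fderiv ℝ X (t • x)).comp (t • ContinuousLinearMap.id ℝ _)).prod
        (ContinuousLinearMap.id ℝ _))) (Set.Icc 0 1) :=
    (ContinuousLinearMap.prodₗᵢ ℝ).continuous.comp_continuousOn (c5.prodMk continuousOn_const)
  have hF'cont : ContinuousOn (F' x) (Set.Icc 0 1) := c3.clm_comp c6
  -- measurability and integrability hypotheses
  have huIoc : Ι (0:ℝ) 1 = Set.Ioc (0:ℝ) 1 := Set.uIoc_of_le zero_le_one
  have hF'meas : AEStronglyMeasurable (F' x) (volume.restrict (Ι (0:ℝ) 1)) := by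
    rw [huIoc]
    exact (hF'cont.mono Set.Ioc_subset_Icc_self).aestronglyMeasurable measurableSet_Ioc
  have hintcont : ∀ y ∈ closedBall x ε,
      ContinuousOn (fun t : ℝ => (⟪X (t • y), y⟫ : ℝ)) (Set.Icc 0 1) := by
    intro y hy
    exact (hXc.comp (by fun_prop) (fun t ht => hmem t ht y hy)).inner continuousOn_const
  have hF_meas : ∀ᶠ y in nhds x, AEStronglyMeasurable
      (fun t : ℝ => (⟪X (t • y), y⟫ : ℝ)) (volume.restrict (Ι (0:ℝ) 1)) := by
    filter_upwards [closedBall_mem_nhds x εpos] with y hy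
    rw [huIoc]
    exact ((hintcont y hy).mono Set.Ioc_subset_Icc_self).aestronglyMeasurable measurableSet_Ioc
  have hxball : x ∈ closedBall x ε := mem_closedBall_self εpos.le
  have hF_int : IntervalIntegrable (fun t : ℝ => (⟪X (t • x), x⟫ : ℝ)) volume 0 1 :=
    (hintcont x hxball).intervalIntegrable_of_Icc zero_le_one
  have h_bound : ∀ᵐ t ∂(volume : Measure ℝ), t ∈ Ι (0:ℝ) 1 →
      ∀ y ∈ ball x ε, ‖F' y t‖ ≤ M := by
    refine Filter.Eventually.of_forall fun t ht y hy => ?_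
    rw [huIoc] at ht
    exact hbound t (Set.Ioc_subset_Icc_self ht) y (ball_subset_closedBall hy)
  have h_diff : ∀ᵐ t ∂(volume : Measure ℝ), t ∈ Ι (0:ℝ) 1 →
      ∀ y ∈ ball x ε, HasFDerivAt (fun y => (⟪X (t • y), y⟫ : ℝ)) (F' y t) y := by
    refine Filter.Eventually.of_forall fun t ht y hy => ?_
    rw [huIoc] at ht
    exact hFderiv t (Set.Ioc_subset_Icc_self ht) y (ball_subset_closedBall hy)
  -- differentiation under the integral sign
  have key : HasFDerivAt (fun y => ∫ t in (0:ℝ)..1, (⟪X (t • y), y⟫ : ℝ))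
      (∫ t in (0:ℝ)..1, F' x t) x :=
    intervalIntegral.hasFDerivAt_integral_of_dominated_of_fderiv_le (ball_mem_nhds x εpos) hF_meas hF_int
      hF'meas h_bound (intervalIntegrable_const) h_diff
  have hHF : HasFDerivAt H (∫ t in (0:ℝ)..1, F' x t) x :=
    key.congr_of_eventuallyEq (Filter.eventuallyEq_of_mem (hΩopen.mem_nhds hx) hH)
  -- the gradient pairing
  have hF'int : IntervalIntegrable (F' x) volume 0 1 :=
    hF'cont.intervalIntegrable_of_Icc zero_le_one
  have hgrad : (⟪gradient H x, x⟫ : ℝ) = ∫ t in (0:ℝ)..1, (F' x t) x := by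
    have h1 : (⟪gradient H x, x⟫ : ℝ) = (fderiv ℝ H x) x :=
      InnerProductSpace.toDual_symm_apply
    rw [h1, hHF.fderiv, ContinuousLinearMap.intervalIntegral_apply hF'int x]
  -- fundamental theorem of calculus
  have hg' : ∀ t ∈ Set.uIcc (0:ℝ) 1, HasDerivAt (fun t : ℝ => t * ⟪X (t • x), x⟫)
      (1 * ⟪X (t • x), x⟫ + t * ⟪(fderiv ℝ X (t • x)) x, x⟫) t := by
    intro t ht
    rw [Set.uIcc_of_le zero_le_one] at ht
    have h1 : HasDerivAt (fun t : ℝ => t • x) x t := by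
      simpa using (hasDerivAt_id t).smul_const x
    have h2 : HasDerivAt (fun t : ℝ => X (t • x)) ((fderiv ℝ X (t • x)) x) t :=
      (hdiff _ (hΩstar x hx t ht)).comp_hasDerivAt t h1
    have h3 : HasDerivAt (fun t : ℝ => (⟪X (t • x), x⟫ : ℝ))
        (⟪(fderiv ℝ X (t • x)) x, x⟫ : ℝ) t := by
      simpa [real_inner_comm] using h2.inner ℝ (hasDerivAt_const t x)
    exact (hasDerivAt_id t).mul h3
  have hg'cont : ContinuousOn
      (fun t : ℝ => 1 * ⟪X (t • x), x⟫ + t * ⟪(fderiv ℝ X (t • x)) x, x⟫) (Set.Icc 0 1) := by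
    apply (continuousOn_const.mul (c1.inner continuousOn_const)).add
    exact continuousOn_id.mul ((c2.clm_apply continuousOn_const).inner continuousOn_const)
  have hg'int : IntervalIntegrable
      (fun t : ℝ => 1 * ⟪X (t • x), x⟫ + t * ⟪(fderiv ℝ X (t • x)) x, x⟫) volume 0 1 :=
    hg'cont.intervalIntegrable_of_Icc zero_le_one
  have hftc : (∫ t in (0:ℝ)..1, (1 * ⟪X (t • x), x⟫ + t * ⟪(fderiv ℝ X (t • x)) x, x⟫ : ℝ))
      = ⟪X x, x⟫ := by
    rw [intervalIntegral.integral_eq_sub_of_hasDerivAt hg' hg'int]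
    norm_num
  -- identify the two integrands
  have hpt : ∀ t : ℝ, (F' x t) x
      = 1 * ⟪X (t • x), x⟫ + t * ⟪(fderiv ℝ X (t • x)) x, x⟫ := by
    intro t
    have hv : (F' x t) x = ⟪X (t • x), x⟫ + ⟪(fderiv ℝ X (t • x)) (t • x), x⟫ := by
      simp [hF'def]
    rw [hv, ContinuousLinearMap.map_smul, real_inner_smul_left]
    ring
  rw [hgrad, ← hftc]
  exact intervalIntegral.integral_congr fun t _ => (hpt t).symm
end

section
/- Let X : ℝⁿ → ℝⁿ be a continuously differentiable vector field and define H_X(x) = ∫₀¹ ⟨X(t·x), x⟩ dt. Then the vector field u := X − ∇H_X satisfies ⟨u(x), x⟩ = 0 for all x ∈ ℝⁿ, so that X decomposes as X = ∇H_X + u with a conservative part and a part orthogonal to the radial direction (sphere-invariant part), and moreover H_X(0) = 0. -/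
open RealInnerProductSpace intervalIntegral

variable {n : ℕ}

local notation "E" => EuclideanSpace ℝ (Fin n)

noncomputable def Fd (X : E → E) (x : E) (t : ℝ) : E →L[ℝ] ℝ :=
  (innerSL ℝ x).comp ((fderiv ℝ X (t • x)).comp (t • ContinuousLinearMap.id ℝ E))
    + innerSL ℝ (X (t • x))

lemma hasFDerivAt_F (X : E → E) (hX : ContDiff ℝ 1 X) (t : ℝ) (x : E) :
    HasFDerivAt (fun y : E => ⟪X (t • y), y⟫) (Fd X x t) x := by
  have h1 : HasFDerivAt (fun y : E => X (t • y))
      ((fderiv ℝ X (t • x)).comp (t • ContinuousLinearMap.id ℝ E)) x := by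
    have hs : HasFDerivAt (fun y : E => t • y) (t • ContinuousLinearMap.id ℝ E) x :=
      (t • ContinuousLinearMap.id ℝ E).hasFDerivAt
    exact ((hX.differentiable one_ne_zero (t • x)).hasFDerivAt).comp x hs
  have h2 : HasFDerivAt (fun y : E => y) (ContinuousLinearMap.id ℝ E) x := hasFDerivAt_id x
  have := h1.inner ℝ h2
  refine this.congr_fderiv (Eq.symm ?_)
  ext v
  simp only [Fd, ContinuousLinearMap.add_apply, ContinuousLinearMap.coe_comp',
    Function.comp_apply, ContinuousLinearMap.smul_apply, ContinuousLinearMap.coe_id', id_eq,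
    innerSL_apply_apply, fderivInnerCLM_apply, ContinuousLinearMap.prod_apply]
  rw [real_inner_comm]
  exact add_comm _ _

lemma cont_Fd (X : E → E) (hX : ContDiff ℝ 1 X) (x : E) :
    Continuous fun t : ℝ => Fd X x t := by
  have cD : Continuous (fderiv ℝ X) := hX.continuous_fderiv one_ne_zero
  have c1 : Continuous fun t : ℝ => (fderiv ℝ X (t • x)).comp (t • ContinuousLinearMap.id ℝ E) :=
    (cD.comp (continuous_id.smul continuous_const)).clm_comp
      ((continuous_id.smul (continuous_const : Continuous fun _ : ℝ => ContinuousLinearMap.id ℝ E)))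
  have c2 : Continuous fun t : ℝ => innerSL ℝ (X (t • x)) :=
    (innerSL ℝ).continuous.comp (hX.continuous.comp (continuous_id.smul continuous_const))
  exact (continuous_const.clm_comp c1).add c2

lemma key_hasFDerivAt (X : E → E) (hX : ContDiff ℝ 1 X) (x₀ : E) :
    HasFDerivAt (fun x : E => ∫ t in (0:ℝ)..1, ⟪X (t • x), x⟫)
      (∫ t in (0:ℝ)..1, Fd X x₀ t) x₀ := by
  have cX : Continuous X := hX.continuous
  have cD : Continuous (fderiv ℝ X) := hX.continuous_fderiv one_ne_zero
  obtain ⟨C, hC⟩ := (isCompact_closedBall (0:E) (‖x₀‖+1)).exists_bound_of_continuousOn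
    cX.continuousOn
  obtain ⟨C', hC'⟩ := (isCompact_closedBall (0:E) (‖x₀‖+1)).exists_bound_of_continuousOn
    cD.continuousOn
  set B : ℝ := (‖x₀‖+1) * max C' 0 + max C 0 with hB
  apply intervalIntegral.hasFDerivAt_integral_of_dominated_of_fderiv_le
    (F := fun x t => ⟪X (t • x), x⟫) (F' := fun x t => Fd X x t)
    (bound := fun _ => B) (s := Metric.ball x₀ 1) (Metric.ball_mem_nhds x₀ one_pos)
  · filter_upwards with x
    exact ((cX.comp (continuous_id.smul continuous_const)).inner continuous_const
      ).aestronglyMeasurable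
  · exact ((cX.comp (continuous_id.smul continuous_const)).inner
      continuous_const).intervalIntegrable 0 1
  · exact (cont_Fd X hX x₀).aestronglyMeasurable
  · filter_upwards with t ht x hx
    have ht' : t ∈ Set.Ioc (0:ℝ) 1 := by rwa [Set.uIoc_of_le (by norm_num : (0:ℝ) ≤ 1)] at ht
    have hxn : ‖x‖ ≤ ‖x₀‖ + 1 := by
      have := mem_ball_iff_norm.mp hx
      have := norm_sub_norm_le x x₀
      linarith
    have htx : t • x ∈ Metric.closedBall (0:E) (‖x₀‖+1) := by
      rw [Metric.mem_closedBall, dist_zero_right, norm_smul, Real.norm_eq_abs]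
      have : |t| ≤ 1 := by rw [abs_of_pos ht'.1]; exact ht'.2
      nlinarith [norm_nonneg x, abs_nonneg t]
    have h1 : ‖(innerSL ℝ x).comp ((fderiv ℝ X (t • x)).comp
        (t • ContinuousLinearMap.id ℝ E))‖ ≤ (‖x₀‖+1) * max C' 0 := by
      calc ‖(innerSL ℝ x).comp ((fderiv ℝ X (t • x)).comp (t • ContinuousLinearMap.id ℝ E))‖
          ≤ ‖innerSL ℝ x‖ * ‖(fderiv ℝ X (t • x)).comp (t • ContinuousLinearMap.id ℝ E)‖ :=
            ContinuousLinearMap.opNorm_comp_le _ _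
        _ ≤ ‖x‖ * (‖fderiv ℝ X (t • x)‖ * ‖t • ContinuousLinearMap.id ℝ E‖) := by
            rw [innerSL_apply_norm]
            exact mul_le_mul_of_nonneg_left (ContinuousLinearMap.opNorm_comp_le _ _)
              (norm_nonneg x)
        _ ≤ (‖x₀‖+1) * max C' 0 := by
            have hfd : ‖fderiv ℝ X (t • x)‖ ≤ max C' 0 :=
              le_trans (hC' _ htx) (le_max_left _ _)
            have hsm : ‖t • ContinuousLinearMap.id ℝ E‖ ≤ 1 := by
              have h1 : |t| ≤ 1 := by rw [abs_of_pos ht'.1]; exact ht'.2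
              refine le_trans (ContinuousLinearMap.opNorm_le_bound _ (abs_nonneg t)
                fun v => ?_) h1
              simp [norm_smul, Real.norm_eq_abs]
            have step : ‖fderiv ℝ X (t • x)‖ * ‖t • ContinuousLinearMap.id ℝ E‖ ≤ max C' 0 :=
              le_trans (mul_le_mul hfd hsm (norm_nonneg _) (le_max_right C' 0)) (by ring_nf; rfl)
            refine le_trans (mul_le_mul hxn step (by positivity) (by positivity)) le_rfl
    have h2 : ‖innerSL ℝ (X (t • x))‖ ≤ max C 0 := by
      rw [innerSL_apply_norm]
      exact le_trans (hC _ htx) (le_max_left _ _)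
    calc ‖Fd X x t‖ ≤ _ + _ := norm_add_le _ _
      _ ≤ B := add_le_add h1 h2
  · exact intervalIntegrable_const
  · filter_upwards with t _ x _
    exact hasFDerivAt_F X hX t x

lemma inner_gradient_eq (f : E → ℝ) (x v : E) : ⟪gradient f x, v⟫ = fderiv ℝ f x v := by
  rw [gradient, ← InnerProductSpace.toDual_apply_apply, LinearIsometryEquiv.apply_symm_apply]

lemma integral_Fd_apply (X : E → E) (hX : ContDiff ℝ 1 X) (x₀ : E) :
    (∫ t in (0:ℝ)..1, Fd X x₀ t) x₀ = ⟪X x₀, x₀⟫ := by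
  have hint : IntervalIntegrable (Fd X x₀) MeasureTheory.volume 0 1 :=
    (cont_Fd X hX x₀).intervalIntegrable 0 1
  rw [ContinuousLinearMap.intervalIntegral_apply hint]
  have hg : ∀ t ∈ Set.uIcc (0:ℝ) 1,
      HasDerivAt (fun s => s * ⟪X (s • x₀), x₀⟫) (Fd X x₀ t x₀) t := by
    intro t _
    have hline : HasDerivAt (fun s : ℝ => s • x₀) x₀ t := by
      simpa using (hasDerivAt_id t).smul_const x₀
    have hXl : HasDerivAt (fun s : ℝ => X (s • x₀)) ((fderiv ℝ X (t • x₀)) x₀) t :=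
      ((hX.differentiable one_ne_zero (t • x₀)).hasFDerivAt).comp_hasDerivAt t hline
    have hin : HasDerivAt (fun s : ℝ => ⟪X (s • x₀), x₀⟫)
        (⟪(fderiv ℝ X (t • x₀)) x₀, x₀⟫) t := by
      have := hXl.inner ℝ (hasDerivAt_const t x₀)
      simpa using this
    have := (hasDerivAt_id t).mul hin
    refine this.congr_deriv (Eq.symm ?_)
    simp only [Fd, ContinuousLinearMap.add_apply, ContinuousLinearMap.coe_comp',
      Function.comp_apply, ContinuousLinearMap.smul_apply, ContinuousLinearMap.coe_id', id_eq,
      innerSL_apply_apply, map_smul, inner_smul_right]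
    rw [real_inner_comm]
    simp [smul_eq_mul]
    ring
  have hintc : IntervalIntegrable (fun t => Fd X x₀ t x₀) MeasureTheory.volume 0 1 :=
    ((ContinuousLinearMap.apply ℝ ℝ x₀).continuous.comp (cont_Fd X hX x₀)).intervalIntegrable 0 1
  rw [intervalIntegral.integral_eq_sub_of_hasDerivAt hg hintc]
  simp


/-- **Presnov decomposition**: for a `C¹` vector field `X` on `ℝⁿ` with Presnov
potential `H_X x = ∫₀¹ ⟪X (t • x), x⟫ dt`, the part `u = X - ∇H_X` is orthogonal to
the radial direction, and `H_X 0 = 0`. -/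
theorem presnov_decomposition
    {n : ℕ} (X : EuclideanSpace ℝ (Fin n) → EuclideanSpace ℝ (Fin n))
    (hX : ContDiff ℝ 1 X)
    (H : EuclideanSpace ℝ (Fin n) → ℝ)
    (hH : ∀ x, H x = ∫ t in (0:ℝ)..1, ⟪X (t • x), x⟫)
    (u : EuclideanSpace ℝ (Fin n) → EuclideanSpace ℝ (Fin n))
    (hu : ∀ x, u x = X x - gradient H x) :
    (∀ x, ⟪u x, x⟫ = 0) ∧ (∀ x, X x = gradient H x + u x) ∧ H 0 = 0 := by
  have hHeq : H = fun x => ∫ t in (0:ℝ)..1, ⟪X (t • x), x⟫ := funext hH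
  have grad : ∀ x, ⟪gradient H x, x⟫ = ⟪X x, x⟫ := by
    intro x
    have hd : HasFDerivAt H (∫ t in (0:ℝ)..1, Fd X x t) x := by
      rw [hHeq]; exact key_hasFDerivAt X hX x
    rw [inner_gradient_eq, hd.fderiv, integral_Fd_apply X hX x]
  refine ⟨fun x => ?_, fun x => ?_, ?_⟩
  · rw [hu, inner_sub_left, grad x, sub_self]
  · rw [hu]; abel
  · rw [hH 0]; simp
end

section
/- Let X : ℝⁿ → ℝⁿ be a continuously differentiable vector field, and suppose X(x) = ∇H₁(x) + u₁(x) = ∇H₂(x) + u₂(x) for all x ∈ ℝⁿ, where H₁, H₂ : ℝⁿ → ℝ are continuously differentiable with H₁(0) = H₂(0) = 0 and u₁, u₂ satisfy ⟨u₁(x), x⟩ = ⟨u₂(x), x⟩ = 0 for all x ∈ ℝⁿ. Then H₁ = H₂ and u₁ = u₂. -/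
open RealInnerProductSpace

/-- **Uniqueness of the Presnov decomposition**: if a `C¹` vector field `X` on `ℝⁿ`
decomposes in two ways as a gradient plus a radially orthogonal field, with both
potentials `C¹` and vanishing at the origin, then the two decompositions coincide. -/
theorem presnov_decomposition_unique
    {n : ℕ} (X : EuclideanSpace ℝ (Fin n) → EuclideanSpace ℝ (Fin n))
    (hX : ContDiff ℝ 1 X)
    (H₁ H₂ : EuclideanSpace ℝ (Fin n) → ℝ)
    (hH₁ : ContDiff ℝ 1 H₁) (hH₂ : ContDiff ℝ 1 H₂)
    (hH₁0 : H₁ 0 = 0) (hH₂0 : H₂ 0 = 0)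
    (u₁ u₂ : EuclideanSpace ℝ (Fin n) → EuclideanSpace ℝ (Fin n))
    (hdec₁ : ∀ x, X x = gradient H₁ x + u₁ x)
    (hdec₂ : ∀ x, X x = gradient H₂ x + u₂ x)
    (hu₁ : ∀ x, ⟪u₁ x, x⟫ = 0)
    (hu₂ : ∀ x, ⟪u₂ x, x⟫ = 0) :
    H₁ = H₂ ∧ u₁ = u₂ := by
  have key : ∀ x : EuclideanSpace ℝ (Fin n),
      ⟪gradient H₁ x - gradient H₂ x, x⟫ = 0 := by
    intro x
    have h := (hdec₁ x).symm.trans (hdec₂ x)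
    have h2 : gradient H₁ x - gradient H₂ x = u₂ x - u₁ x := by
      have := h
      rw [sub_eq_sub_iff_add_eq_add, this, add_comm]
    rw [h2, inner_sub_left, hu₁, hu₂, sub_zero]
  -- derivative of the restriction of a potential to a line through the origin
  have hline : ∀ (H : EuclideanSpace ℝ (Fin n) → ℝ), ContDiff ℝ 1 H →
      ∀ (x : EuclideanSpace ℝ (Fin n)) (t : ℝ),
      HasDerivAt (fun s : ℝ => H (s • x)) ⟪gradient H (t • x), x⟫ t := by
    intro H hH x t
    have hdiff : DifferentiableAt ℝ H (t • x) := (hH.differentiable one_ne_zero).differentiableAt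
    have h1 : HasFDerivAt H ((InnerProductSpace.toDual ℝ _) (gradient H (t • x))) (t • x) :=
      hdiff.hasGradientAt.hasFDerivAt
    have h2 : HasDerivAt (fun s : ℝ => s • x) x t := by
      simpa using (hasDerivAt_id t).smul_const x
    have := h1.comp_hasDerivAt t h2
    simpa [InnerProductSpace.toDual_apply_apply, Function.comp_def] using this
  have hgradcont : ∀ (H : EuclideanSpace ℝ (Fin n) → ℝ), ContDiff ℝ 1 H →
      Continuous (gradient H) := by
    intro H hH
    have : Continuous (fun y => fderiv ℝ H y) := hH.continuous_fderiv one_ne_zero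
    exact (InnerProductSpace.toDual ℝ _).symm.continuous.comp this
  have hHeq : H₁ = H₂ := by
    funext x
    set φ : ℝ → ℝ := fun t => ⟪gradient H₁ (t • x) - gradient H₂ (t • x), x⟫ with hφ
    have hg : ∀ t, HasDerivAt (fun s : ℝ => H₁ (s • x) - H₂ (s • x)) (φ t) t := by
      intro t
      have := (hline H₁ hH₁ x t).sub (hline H₂ hH₂ x t)
      simpa [hφ, inner_sub_left, Pi.sub_def] using this
    have hφcont : Continuous φ := by
      apply Continuous.inner
      · exact ((hgradcont H₁ hH₁).sub (hgradcont H₂ hH₂)).comp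
          (continuous_id.smul continuous_const)
      · exact continuous_const
    have hφ0 : ∀ t : ℝ, t ≠ 0 → φ t = 0 := by
      intro t ht
      have h := key (t • x)
      rw [real_inner_smul_right] at h
      have : φ t = t⁻¹ * (t * φ t) := by field_simp
      rw [this, h, mul_zero]
    have hφall : ∀ t, φ t = 0 := by
      have : φ = fun _ => (0 : ℝ) := by
        apply Continuous.ext_on (dense_compl_singleton (0 : ℝ)) hφcont continuous_const
        intro t ht
        exact hφ0 t ht
      intro t; rw [this]
    have hconst := is_const_of_deriv_eq_zero (f := fun s : ℝ => H₁ (s • x) - H₂ (s • x))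
      (fun t => (hg t).differentiableAt) (fun t => by rw [(hg t).deriv]; exact hφall t) 1 0
    simp only [one_smul, zero_smul, hH₁0, hH₂0, sub_zero] at hconst
    linarith [hconst]
  refine ⟨hHeq, funext fun x => ?_⟩
  have h1 := hdec₁ x
  have h2 := hdec₂ x
  rw [hHeq] at h1
  rw [h1] at h2
  exact add_left_cancel h2
end
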